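/- arXiv:2309.07897 — 2 statements merged into one kernel-verified Lean document; each statement's English description precedes it below -/
import Mathlib

section
/- Let E be a finite-dimensional real normed vector space and let g : E → E be nonexpansive, i.e., ‖g(x) − g(y)‖ ≤ ‖x − y‖ for all x, y ∈ E. Assume the fixed-point set {x ∈ E : g(x) = x} is nonempty. Then for any γ ∈ (0,1) and any initial point x⁰ ∈ E, the Krasnoselskii–Mann iteration x^{k+1} = (1 − γ) x^k + γ g(x^k) converges to some fixed point x* of g. -/
set_option maxHeartbeats 1000000

open Filter Topology

/-- Krasnoselskii–Mann iteration: for a nonexpansive self-map `g` of a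
finite-dimensional real normed space with a nonempty fixed-point set, the
averaged iteration `x^{k+1} = (1-γ) x^k + γ g(x^k)` with `γ ∈ (0,1)` converges
to some fixed point of `g`, from any initial point. -/
theorem km_iteration_converges
    {E : Type*} [NormedAddCommGroup E] [NormedSpace ℝ E] [FiniteDimensional ℝ E]
    (g : E → E)
    (hg : ∀ x y : E, ‖g x - g y‖ ≤ ‖x - y‖)
    (hfix : ∃ x : E, g x = x)
    (γ : ℝ) (hγ0 : 0 < γ) (hγ1 : γ < 1)
    (x : ℕ → E)
    (hx : ∀ k : ℕ, x (k + 1) = (1 - γ) • x k + γ • g (x k)) :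
    ∃ xstar : E, g xstar = xstar ∧
      Filter.Tendsto x Filter.atTop (nhds xstar) := by
  obtain ⟨p, hp⟩ := hfix
  have hγ1' : (0:ℝ) < 1 - γ := by linarith
  set T : E → E := fun z => (1 - γ) • z + γ • g z with hTdef
  have hxT : ∀ k, x (k + 1) = T (x k) := fun k => hx k
  -- T is nonexpansive
  have hTne : ∀ z w, ‖T z - T w‖ ≤ ‖z - w‖ := by
    intro z w
    have h1 : T z - T w = (1 - γ) • (z - w) + γ • (g z - g w) := by
      simp only [hTdef, smul_sub]; abel
    rw [h1]
    calc ‖(1-γ) • (z-w) + γ • (g z - g w)‖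
        ≤ ‖(1-γ) • (z-w)‖ + ‖γ • (g z - g w)‖ := norm_add_le _ _
      _ = (1-γ) * ‖z-w‖ + γ * ‖g z - g w‖ := by
          rw [norm_smul, norm_smul, Real.norm_of_nonneg hγ1'.le,
            Real.norm_of_nonneg hγ0.le]
      _ ≤ (1-γ) * ‖z-w‖ + γ * ‖z-w‖ := by nlinarith [hg z w]
      _ = ‖z - w‖ := by ring
  have hTfix : ∀ q, g q = q → T q = q := by
    intro q hq
    show (1 - γ) • q + γ • g q = q
    rw [hq]; module
  -- Fejér monotonicity
  have hfej : ∀ q, g q = q → ∀ k, ‖x (k+1) - q‖ ≤ ‖x k - q‖ := by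
    intro q hq k
    rw [hxT k]
    calc ‖T (x k) - q‖ = ‖T (x k) - T q‖ := by rw [hTfix q hq]
      _ ≤ ‖x k - q‖ := hTne _ _
  have hfej' : ∀ q, g q = q → Antitone fun k => ‖x k - q‖ := by
    intro q hq
    exact antitone_nat_of_succ_le fun k => hfej q hq k
  set R₀ : ℝ := ‖x 0 - p‖ with hR₀
  have hball : ∀ k, ‖x k - p‖ ≤ R₀ := fun k => hfej' p hp (Nat.zero_le k)
  -- the residuals a k = ‖g (x k) - x k‖ are antitone
  have hdiffx : ∀ k, x (k+1) - x k = γ • (g (x k) - x k) := by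
    intro k; rw [hx k]; module
  set a : ℕ → ℝ := fun k => ‖g (x k) - x k‖ with hadef
  have hb_eq : ∀ k, ‖x (k+1) - x k‖ = γ * a k := by
    intro k
    rw [hdiffx k, norm_smul, Real.norm_of_nonneg hγ0.le]
  have hb_anti : ∀ k, ‖x (k+2) - x (k+1)‖ ≤ ‖x (k+1) - x k‖ := by
    intro k
    rw [hxT (k+1), hxT k]
    exact hTne _ _
  have ha_anti : Antitone a := by
    apply antitone_nat_of_succ_le
    intro k
    have h1 := hb_anti k
    rw [hb_eq (k+1), hb_eq k] at h1
    exact le_of_mul_le_mul_left h1 hγ0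
  have ha_bdd : BddBelow (Set.range a) := ⟨0, by rintro _ ⟨k, rfl⟩; exact norm_nonneg _⟩
  set r : ℝ := ⨅ n, a n with hrdef
  have ha_tendsto : Tendsto a atTop (𝓝 r) := tendsto_atTop_ciInf ha_anti ha_bdd
  have hr0 : 0 ≤ r := le_ciInf fun n => norm_nonneg _
  -- compactness: extract a convergent subsequence
  have hmem : ∀ k, x k ∈ Metric.closedBall p R₀ := by
    intro k
    rw [Metric.mem_closedBall, dist_eq_norm]
    exact hball k
  obtain ⟨y0, hy0mem, φ, hφ, hφlim⟩ :=
    (isCompact_closedBall p R₀).tendsto_subseq hmem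
  have hφtop : Tendsto φ atTop atTop := hφ.tendsto_atTop
  have hgc : Continuous g := by
    have : LipschitzWith 1 g := by
      apply LipschitzWith.of_dist_le_mul
      intro z w
      simpa [dist_eq_norm] using hg z w
    exact this.continuous
  have hTc : Continuous T := by
    apply Continuous.add
    · exact continuous_id.const_smul _
    · exact hgc.const_smul _
  -- key claim: r = 0 (asymptotic regularity, Ishikawa)
  have hr_eq : r = 0 := by
    by_contra hrne
    have hrpos : 0 < r := lt_of_le_of_ne hr0 (Ne.symm hrne)
    -- iterate formula
    have hxiter : ∀ k m, x (k + m) = T^[m] (x k) := by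
      intro k m
      induction m with
      | zero => simp
      | succ m ih =>
        have : k + (m+1) = (k + m) + 1 := by omega
        rw [this, hxT (k+m), ih, Function.iterate_succ_apply']
    set y : ℕ → E := fun m => T^[m] y0 with hydef
    have hstep : ∀ m, y (m+1) = T (y m) := fun m => Function.iterate_succ_apply' T m y0
    have hylim : ∀ m, Tendsto (fun j => x (φ j + m)) atTop (𝓝 (y m)) := by
      intro m
      have h1 : (fun j => x (φ j + m)) = (T^[m]) ∘ (x ∘ φ) := by
        funext j
        exact hxiter (φ j) m
      rw [h1]
      exact ((hTc.iterate m).tendsto y0).comp hφlim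
    -- residuals along y are all exactly r
    have hya : ∀ m, ‖g (y m) - y m‖ = r := by
      intro m
      have h1 : Tendsto (fun j => ‖g (x (φ j + m)) - x (φ j + m)‖) atTop
          (𝓝 ‖g (y m) - y m‖) :=
        (((hgc.tendsto _).comp (hylim m)).sub (hylim m)).norm
      have h2 : Tendsto (fun j => a (φ j + m)) atTop (𝓝 r) :=
        ha_tendsto.comp (tendsto_atTop_mono (fun j => Nat.le_add_right (φ j) m) hφtop)
      exact tendsto_nhds_unique h1 h2
    have hynorm : ∀ m, ‖y m - p‖ ≤ R₀ := by
      intro m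
      have h1 : Tendsto (fun j => ‖x (φ j + m) - p‖) atTop (𝓝 ‖y m - p‖) :=
        ((hylim m).sub_const p).norm
      exact le_of_tendsto h1 (Eventually.of_forall fun j => hball _)
    have hydiff : ∀ m, ‖y (m+1) - y m‖ = γ * r := by
      intro m
      have h1 : y (m+1) - y m = γ • (g (y m) - y m) := by
        rw [hstep m]; show (1 - γ) • y m + γ • g (y m) - y m = _; module
      rw [h1, norm_smul, Real.norm_of_nonneg hγ0.le, hya m]
    have hpath : ∀ i n : ℕ, ‖y (i + n) - y i‖ ≤ n * (γ * r) := by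
      intro i n
      induction n with
      | zero => simp
      | succ n ih =>
        have h1 : i + (n+1) = (i + n) + 1 := by omega
        calc ‖y (i + (n+1)) - y i‖
            ≤ ‖y (i + (n+1)) - y (i+n)‖ + ‖y (i+n) - y i‖ := norm_sub_le_norm_sub_add_norm_sub _ _ _
          _ ≤ γ * r + n * (γ * r) := by
              rw [h1, hydiff (i+n)]
              exact add_le_add le_rfl ih
          _ = (n+1 : ℕ) * (γ * r) := by push_cast; ring
    -- Ishikawa induction
    have hkey : ∀ n : ℕ, ∀ i : ℕ, (1 + (n:ℝ) * γ) * r ≤ ‖g (y (i + n)) - y i‖ := by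
      intro n
      induction n with
      | zero => intro i; simp [hya]
      | succ n ih =>
        intro i
        have hj : i + (n+1) = (i+1) + n := by omega
        set L := ‖g (y (i + (n+1))) - y i‖ with hL
        have hid : g (y (i + (n+1))) - y (i+1)
            = (1-γ) • (g (y (i + (n+1))) - y i) + γ • (g (y (i + (n+1))) - g (y i)) := by
          rw [hstep i]
          show _ - ((1 - γ) • y i + γ • g (y i)) = _
          module
        have h1 : ‖g (y (i + (n+1))) - y (i+1)‖ ≤ (1-γ) * L + γ * ‖y (i + (n+1)) - y i‖ := by
          rw [hid]
          calc ‖(1-γ) • (g (y (i + (n+1))) - y i) + γ • (g (y (i + (n+1))) - g (y i))‖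
              ≤ ‖(1-γ) • (g (y (i + (n+1))) - y i)‖ + ‖γ • (g (y (i + (n+1))) - g (y i))‖ :=
                norm_add_le _ _
            _ ≤ (1-γ) * L + γ * ‖y (i + (n+1)) - y i‖ := by
                rw [norm_smul, norm_smul, Real.norm_of_nonneg hγ1'.le,
                  Real.norm_of_nonneg hγ0.le]
                exact add_le_add le_rfl (by nlinarith [hg (y (i + (n+1))) (y i)])
        have h2 : ‖y (i + (n+1)) - y i‖ ≤ (n+1 : ℕ) * (γ * r) := hpath i (n+1)
        have h3 : (1 + (n:ℝ) * γ) * r ≤ ‖g (y (i + (n+1))) - y (i+1)‖ := by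
          have := ih (i+1)
          rwa [← hj] at this
        have h2' : γ * ‖y (i + (n+1)) - y i‖ ≤ γ * ((n+1 : ℝ) * (γ * r)) := by
          push_cast at h2
          exact mul_le_mul_of_nonneg_left h2 hγ0.le
        have h4 : (1 + (n:ℝ) * γ) * r ≤ (1-γ) * L + γ * ((n+1 : ℝ) * (γ * r)) := by
          linarith
        have h5 : (1-γ) * ((1 + ((n:ℝ)+1) * γ) * r) ≤ (1-γ) * L := by
          nlinarith
        have h6 : (1 + ((n:ℝ)+1) * γ) * r ≤ L := le_of_mul_le_mul_left h5 hγ1'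
        push_cast
        exact h6
    -- contradiction with boundedness
    have hbound : ∀ n : ℕ, (1 + (n:ℝ) * γ) * r ≤ 2 * R₀ := by
      intro n
      have h1 := hkey n 0
      calc (1 + (n:ℝ) * γ) * r ≤ ‖g (y (0 + n)) - y 0‖ := h1
        _ ≤ ‖g (y (0 + n)) - g p‖ + ‖g p - y 0‖ := norm_sub_le_norm_sub_add_norm_sub _ _ _
        _ ≤ ‖y (0 + n) - p‖ + ‖g p - y 0‖ := add_le_add (hg _ _) le_rfl
        _ = ‖y (0 + n) - p‖ + ‖p - y 0‖ := by rw [hp]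
        _ ≤ R₀ + R₀ := by
            refine add_le_add (hynorm _) ?_
            rw [norm_sub_rev]
            exact hynorm 0
        _ = 2 * R₀ := by ring
    obtain ⟨n, hn⟩ := exists_nat_gt ((2 * R₀) / (γ * r))
    have hmul : 0 < γ * r := mul_pos hγ0 hrpos
    have h5 : 2 * R₀ < (n:ℝ) * (γ * r) := by
      rwa [div_lt_iff₀ hmul] at hn
    have h6 := hbound n
    nlinarith
  -- now a → 0, so the subsequence limit y0 is a fixed point
  have ha0 : Tendsto a atTop (𝓝 0) := hr_eq ▸ ha_tendsto
  have hy0fix : g y0 = y0 := by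
    have h1 : Tendsto (fun j => ‖g (x (φ j)) - x (φ j)‖) atTop (𝓝 ‖g y0 - y0‖) :=
      (((hgc.tendsto _).comp hφlim).sub hφlim).norm
    have h2 : Tendsto (fun j => a (φ j)) atTop (𝓝 0) := ha0.comp hφtop
    have h3 : ‖g y0 - y0‖ = 0 := tendsto_nhds_unique h1 h2
    have h4 : g y0 - y0 = 0 := norm_eq_zero.mp h3
    exact sub_eq_zero.mp h4
  -- Fejér monotonicity w.r.t. y0 gives convergence of the whole sequence
  refine ⟨y0, hy0fix, ?_⟩
  have hc_anti : Antitone fun k => ‖x k - y0‖ := hfej' y0 hy0fix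
  have hc_bdd : BddBelow (Set.range fun k => ‖x k - y0‖) :=
    ⟨0, by rintro _ ⟨k, rfl⟩; exact norm_nonneg _⟩
  have hc_tendsto : Tendsto (fun k => ‖x k - y0‖) atTop (𝓝 (⨅ k, ‖x k - y0‖)) :=
    tendsto_atTop_ciInf hc_anti hc_bdd
  have hsub : Tendsto (fun j => ‖x (φ j) - y0‖) atTop (𝓝 0) := by
    have := (hφlim.sub_const y0).norm
    simpa using this
  have hsub' : Tendsto (fun j => ‖x (φ j) - y0‖) atTop (𝓝 (⨅ k, ‖x k - y0‖)) :=
    hc_tendsto.comp hφtop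
  have hinf0 : (⨅ k, ‖x k - y0‖) = 0 := tendsto_nhds_unique hsub' hsub
  have : Tendsto (fun k => ‖x k - y0‖) atTop (𝓝 0) := hinf0 ▸ hc_tendsto
  exact tendsto_iff_norm_sub_tendsto_zero.mpr this
end

section
/- (Fixed points of the algorithm operator are consensus Nash equilibria.) With the setup and assumptions (a)–(c) of Theorem 1 (costs J_i, partial gradients G_i, nonempty closed convex sets Ω_i with metric projections P_i, step-sizes 0 < α_i < 1/ℓ_{i,i}, and an N×N nonnegative row-stochastic matrix W with positive diagonal whose support digraph is strongly connected), define 𝒜 : (Fin N → E) → (Fin N → E) by: for j ≠ i, (𝒜𝐱)_{i,j} = Σ_l w_{il} 𝐱_{l,j}, and (𝒜𝐱)_{i,i} = P_i( Σ_l w_{il} 𝐱_{l,i} − α_i G_i( Σ_l w_{il} 𝐱_l ) ). Then 𝐱 is a fixed point of 𝒜 if and only if there exists a Nash equilibrium x* of the game such that 𝐱_i = x* for every i ∈ Fin N. -/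
open Set Filter

section Helpers

variable {E : Type*} [NormedAddCommGroup E] [InnerProductSpace ℝ E] [CompleteSpace E]

private lemma seg_pt' (x y : E) (t : ℝ) : (1 - t) • x + t • y = x + t • (y - x) := by
  simp [smul_sub, sub_smul]; abel

private lemma line_hasDerivAt' (g : E → ℝ) (Gr x y : E) (hg : HasGradientAt g Gr x) :
    HasDerivAt (fun t : ℝ => g (x + t • (y - x))) (inner ℝ Gr (y - x) : ℝ) 0 := by
  have hc : HasDerivAt (fun t : ℝ => x + t • (y - x)) (y - x) 0 := by
    simpa using ((hasDerivAt_id (0:ℝ)).smul_const (y - x)).const_add x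
  have hf : HasFDerivAt g ((InnerProductSpace.toDual ℝ E) Gr) (x + (0:ℝ) • (y - x)) := by
    simpa using hg.hasFDerivAt
  have h := hf.comp_hasDerivAt (x := (0:ℝ)) hc
  simp at h; exact h

private lemma slope_tendsto' (g : E → ℝ) (Gr x y : E) (hg : HasGradientAt g Gr x) :
    Tendsto (slope (fun t : ℝ => g (x + t • (y - x))) 0) (nhdsWithin 0 (Ioi 0))
      (nhds (inner ℝ Gr (y - x) : ℝ)) :=
  (hasDerivAt_iff_tendsto_slope.1 (line_hasDerivAt' g Gr x y hg)).mono_left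
    (nhdsWithin_mono _ fun _ ht => ne_of_gt ht)

private lemma slope_eval' (g : E → ℝ) (x y : E) (t : ℝ) :
    slope (fun s : ℝ => g (x + s • (y - x))) 0 t = (g (x + t • (y - x)) - g x) / t := by
  rw [slope_def_field]; simp

/-- Gradient inequality for convex functions. -/
private lemma convex_gradient_ineq' (g : E → ℝ) (Gr x y : E)
    (hconv : ConvexOn ℝ Set.univ g) (hg : HasGradientAt g Gr x) :
    g x + (inner ℝ Gr (y - x) : ℝ) ≤ g y := by
  have key : (inner ℝ Gr (y - x) : ℝ) ≤ g y - g x := by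
    refine le_of_tendsto (slope_tendsto' g Gr x y hg) ?_
    filter_upwards [Ioo_mem_nhdsGT_of_mem (by norm_num : (0:ℝ) ∈ Ico (0:ℝ) 1)] with t ht
    have ht0 : 0 < t := ht.1
    have hcv := hconv.2 (mem_univ x) (mem_univ y) (by linarith [ht.2] : (0:ℝ) ≤ 1 - t)
      (le_of_lt ht0) (by ring)
    rw [seg_pt'] at hcv
    rw [slope_eval', div_le_iff₀ ht0]
    simp only [smul_eq_mul] at hcv
    nlinarith
  linarith

/-- First-order condition at a constrained minimizer. -/
private lemma min_gradient_nonneg' (g : E → ℝ) (Gr x y : E) (Ω : Set E)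
    (hΩ : Convex ℝ Ω) (hx : x ∈ Ω) (hy : y ∈ Ω)
    (hmin : ∀ z ∈ Ω, g x ≤ g z) (hg : HasGradientAt g Gr x) :
    0 ≤ (inner ℝ Gr (y - x) : ℝ) := by
  refine ge_of_tendsto (slope_tendsto' g Gr x y hg) ?_
  filter_upwards [Ioo_mem_nhdsGT_of_mem (by norm_num : (0:ℝ) ∈ Ico (0:ℝ) 1)] with t ht
  have ht0 : 0 < t := ht.1
  have hmem : x + t • (y - x) ∈ Ω := by
    have := hΩ hx hy (by linarith [ht.2] : (0:ℝ) ≤ 1 - t) (le_of_lt ht0) (by ring)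
    rwa [seg_pt'] at this
  rw [slope_eval']
  exact div_nonneg (by linarith [hmin _ hmem]) (le_of_lt ht0)

/-- Uniqueness of the variational-inequality characterization of projection. -/
private lemma proj_unique' (Ω : Set E) (u p q : E)
    (hp : p ∈ Ω) (hp' : ∀ w ∈ Ω, (inner ℝ (u - p) (w - p) : ℝ) ≤ 0)
    (hq : q ∈ Ω) (hq' : ∀ w ∈ Ω, (inner ℝ (u - q) (w - q) : ℝ) ≤ 0) : p = q := by
  have h1 := hp' q hq
  have h2 := hq' p hp
  have e3 : (inner ℝ (u - q) (p - q) : ℝ) = - inner ℝ (u - q) (q - p) := by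
    rw [show (p - q : E) = -(q - p) by abel, inner_neg_right]
  have key : (inner ℝ (q - p) (q - p) : ℝ) ≤ 0 := by
    calc (inner ℝ (q - p) (q - p) : ℝ)
        = inner ℝ ((u - p) - (u - q)) (q - p) := by rw [show ((u - p) - (u - q) : E) = q - p by abel]
      _ = inner ℝ (u - p) (q - p) - inner ℝ (u - q) (q - p) := inner_sub_left _ _ _
      _ ≤ 0 := by linarith
  have hz : q - p = 0 := inner_self_eq_zero.mp (le_antisymm key real_inner_self_nonneg)
  exact (sub_eq_zero.mp hz).symm

end Helpers

private lemma consensus_max' {N : ℕ} (W : Matrix (Fin N) (Fin N) ℝ)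
    (hWnonneg : ∀ i j, 0 ≤ W i j) (hWrow : ∀ i, ∑ j, W i j = 1)
    (hWconn : ∀ i j : Fin N, Relation.ReflTransGen (fun a b => 0 < W b a) j i)
    (j : Fin N) (f : Fin N → ℝ) (havg : ∀ i, i ≠ j → f i = ∑ l, W i l * f l) :
    ∀ i, f i ≤ f j := by
  obtain ⟨i0, -, hmax⟩ := Finset.exists_max_image Finset.univ f ⟨j, Finset.mem_univ j⟩
  have claim : ∀ b, Relation.ReflTransGen (fun a b => 0 < W b a) j b →
      f b = f i0 → f j = f i0 := by
    intro b h
    induction h with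
    | refl => exact fun h => h
    | @tail b c h₁ h₂ ih =>
      intro hc
      by_cases hcj : c = j
      · rw [hcj] at hc; exact hc
      · have h1 : ∑ l, W c l * f c = f c := by rw [← Finset.sum_mul, hWrow]; ring
        have hsum : ∑ l, W c l * (f c - f l) = 0 := by
          have h2 := havg c hcj
          calc ∑ l, W c l * (f c - f l)
              = (∑ l, W c l * f c) - ∑ l, W c l * f l := by
                rw [← Finset.sum_sub_distrib]; exact Finset.sum_congr rfl fun l _ => by ring
            _ = f c - f c := by rw [h1, ← h2]
            _ = 0 := sub_self _
        have hterm : ∀ l ∈ Finset.univ, 0 ≤ W c l * (f c - f l) := fun l _ =>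
          mul_nonneg (hWnonneg c l) (by linarith [hmax l (Finset.mem_univ l), hc.ge, hc.le])
        have hb0 := (Finset.sum_eq_zero_iff_of_nonneg hterm).mp hsum b (Finset.mem_univ b)
        have hfb : f b = f c := by
          rcases mul_eq_zero.mp hb0 with h | h
          · exact absurd h (ne_of_gt h₂)
          · linarith [sub_eq_zero.mp h]
        exact ih (hfb.trans hc)
  have hj := claim i0 (hWconn i0 j) rfl
  intro i
  rw [hj]
  exact hmax i (Finset.mem_univ i)

private lemma consensus_real' {N : ℕ} (W : Matrix (Fin N) (Fin N) ℝ)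
    (hWnonneg : ∀ i j, 0 ≤ W i j) (hWrow : ∀ i, ∑ j, W i j = 1)
    (hWconn : ∀ i j : Fin N, Relation.ReflTransGen (fun a b => 0 < W b a) j i)
    (j : Fin N) (f : Fin N → ℝ) (havg : ∀ i, i ≠ j → f i = ∑ l, W i l * f l) :
    ∀ i, f i = f j := by
  have h1 := consensus_max' W hWnonneg hWrow hWconn j f havg
  have h2 := consensus_max' W hWnonneg hWrow hWconn j (fun i => -f i) (by
    intro i hij
    simp only [mul_neg, Finset.sum_neg_distrib]
    rw [← havg i hij])
  intro i
  have := h2 i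
  simp only [neg_le_neg_iff] at this
  linarith [h1 i]

/-- Fixed points of the distributed algorithm operator `𝒜` are exactly the
consensus vectors `𝐱_i = x*` where `x*` is a Nash equilibrium of the game. -/
theorem algorithm_operator_fixed_points_iff_consensus_NE
    {N : ℕ} (hN : 1 ≤ N) (n : Fin N → ℕ)
    (Ω : ∀ i : Fin N, Set (EuclideanSpace ℝ (Fin (n i))))
    (hΩne : ∀ i, (Ω i).Nonempty) (hΩcl : ∀ i, IsClosed (Ω i))
    (hΩconv : ∀ i, Convex ℝ (Ω i))
    (P : ∀ i : Fin N, EuclideanSpace ℝ (Fin (n i)) → EuclideanSpace ℝ (Fin (n i)))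
    (hP : ∀ i (u : EuclideanSpace ℝ (Fin (n i))), P i u ∈ Ω i ∧
      ∀ w ∈ Ω i, (inner ℝ (u - P i u) (w - P i u) : ℝ) ≤ 0)
    (J : ∀ _ : Fin N, (∀ j, EuclideanSpace ℝ (Fin (n j))) → ℝ)
    (G : ∀ i : Fin N, (∀ j, EuclideanSpace ℝ (Fin (n j))) → EuclideanSpace ℝ (Fin (n i)))
    (μ : Fin N → ℝ) (ℓ : Fin N → Fin N → ℝ) (α : Fin N → ℝ)
    -- `G i` is the partial gradient of `J i` with respect to the `i`-th block
    (hgrad : ∀ i (x : ∀ j, EuclideanSpace ℝ (Fin (n j))),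
      HasGradientAt (fun u => J i (Function.update x i u)) (G i x) (x i))
    -- (a) strong convexity and Lipschitz gradient in the own variable
    (hμpos : ∀ i, 0 < μ i) (hμℓ : ∀ i, μ i ≤ ℓ i i)
    (hstrconv : ∀ i (x : ∀ j, EuclideanSpace ℝ (Fin (n j))), ConvexOn ℝ Set.univ
      (fun u => J i (Function.update x i u) - μ i / 2 * ‖u‖ ^ 2))
    (hlip_own : ∀ i (x : ∀ j, EuclideanSpace ℝ (Fin (n j)))
        (u v : EuclideanSpace ℝ (Fin (n i))),
      ‖G i (Function.update x i u) - G i (Function.update x i v)‖ ≤ ℓ i i * ‖u - v‖)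
    -- (b) Lipschitz continuity in the other blocks
    (hlip_other : ∀ i j, j ≠ i → ∀ (x : ∀ j', EuclideanSpace ℝ (Fin (n j')))
        (u v : EuclideanSpace ℝ (Fin (n j))),
      ‖G i (Function.update x j u) - G i (Function.update x j v)‖ ≤ ℓ i j * ‖u - v‖)
    -- (c) diagonal dominance
    (hdd : ∀ i, μ i ≥ ∑ j ∈ Finset.univ.erase i, ℓ i j)
    -- step-sizes
    (hα : ∀ i, 0 < α i ∧ α i < 1 / ℓ i i)
    -- row-stochastic nonnegative weight matrix with positive diagonal and
    -- strongly connected support digraph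
    (W : Matrix (Fin N) (Fin N) ℝ)
    (hWnonneg : ∀ i j, 0 ≤ W i j) (hWrow : ∀ i, ∑ j, W i j = 1)
    (hWdiag : ∀ i, 0 < W i i)
    (hWconn : ∀ i j : Fin N, Relation.ReflTransGen (fun a b => 0 < W b a) j i)
    -- the algorithm operator 𝒜
    (A : (Fin N → ∀ j, EuclideanSpace ℝ (Fin (n j))) →
         (Fin N → ∀ j, EuclideanSpace ℝ (Fin (n j))))
    (hAoff : ∀ X i j, j ≠ i → A X i j = ∑ l, W i l • X l j)
    (hAdiag : ∀ X i,
      A X i i = P i ((∑ l, W i l • X l i) - α i • G i (∑ l, W i l • X l)))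
    (X : Fin N → ∀ j, EuclideanSpace ℝ (Fin (n j))) :
    A X = X ↔
      ∃ xstar : ∀ j, EuclideanSpace ℝ (Fin (n j)),
        ((∀ i, xstar i ∈ Ω i) ∧
          ∀ i, ∀ y ∈ Ω i, J i xstar ≤ J i (Function.update xstar i y)) ∧
        ∀ i, X i = xstar := by
  classical
  -- coordinate evaluation of weighted sums
  have sum_eval : ∀ (m : ℕ) (c : Fin N → ℝ) (v : Fin N → EuclideanSpace ℝ (Fin m)) (k : Fin m),
      (∑ l, c l • v l) k = ∑ l, c l * v l k := by
    intro m c v k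
    have := map_sum (EuclideanSpace.proj (𝕜 := ℝ) k) (fun l => c l • v l) Finset.univ
    simp only [PiLp.proj_apply, map_smul, smul_eq_mul] at this
    exact this
  -- convexity of each player's own-cost function
  have hconvex : ∀ i (x : ∀ j, EuclideanSpace ℝ (Fin (n j))),
      ConvexOn ℝ Set.univ (fun u => J i (Function.update x i u)) := by
    intro i x
    exact (strongConvexOn_iff_convex.mpr (hstrconv i x)).convexOn
      (fun r => by have := (hμpos i).le; positivity)
  -- weighted sums of a consensus vector
  have hsumB : ∀ (xs : ∀ j, EuclideanSpace ℝ (Fin (n j))), (∀ l, X l = xs) →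
      ∀ i j, (∑ l, W i l • X l j) = xs j := by
    intro xs hXeq i j
    ext k
    rw [sum_eval]
    have h1 : (∑ l, W i l * X l j k) = ∑ l, W i l * xs j k :=
      Finset.sum_congr rfl (fun l _ => by rw [hXeq l])
    rw [h1, ← Finset.sum_mul, hWrow, one_mul]
  have hsum2 : ∀ (xs : ∀ j, EuclideanSpace ℝ (Fin (n j))), (∀ l, X l = xs) →
      ∀ i, (∑ l, W i l • X l) = xs := by
    intro xs hXeq i
    funext j
    have h1 : (∑ l, W i l • X l) j = ∑ l, W i l • X l j := by
      simp only [Finset.sum_apply, Pi.smul_apply]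
    rw [h1, hsumB xs hXeq i j]
  constructor
  · -- fixed point → consensus Nash equilibrium
    intro hfix
    set xs : ∀ j, EuclideanSpace ℝ (Fin (n j)) := fun j => X j j with hxs
    have hXeq : ∀ i, X i = xs := by
      intro i
      funext j
      ext k
      refine consensus_real' W hWnonneg hWrow hWconn j (fun i' => X i' j k) ?_ i
      intro i' hij
      have h := (congrFun (congrFun hfix i') j).symm.trans (hAoff X i' j (Ne.symm hij))
      simp only []
      rw [h]
      exact sum_eval _ _ _ _
    have hdiagfix : ∀ i, P i (xs i - α i • G i xs) = xs i := by
      intro i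
      have h := hAdiag X i
      rw [hsumB xs hXeq i i, hsum2 xs hXeq i] at h
      exact h.symm.trans (congrFun (congrFun hfix i) i)
    have hmem : ∀ i, xs i ∈ Ω i := fun i => (hdiagfix i) ▸ (hP i _).1
    have hVI : ∀ i, ∀ w ∈ Ω i, 0 ≤ (inner ℝ (G i xs) (w - xs i) : ℝ) := by
      intro i w hw
      have h2 := (hP i (xs i - α i • G i xs)).2 w hw
      rw [hdiagfix i] at h2
      have he : (xs i - α i • G i xs) - xs i = -(α i • G i xs) := by abel
      rw [he, inner_neg_left, real_inner_smul_left] at h2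
      nlinarith [(hα i).1]
    refine ⟨xs, ⟨hmem, ?_⟩, hXeq⟩
    intro i y hy
    have h := convex_gradient_ineq' (fun u => J i (Function.update xs i u)) (G i xs)
      (xs i) y (hconvex i xs) (hgrad i xs)
    simp only [Function.update_eq_self] at h
    linarith [hVI i y hy]
  · -- consensus Nash equilibrium → fixed point
    rintro ⟨xs, ⟨hmem, hnash⟩, hXeq⟩
    funext i
    funext j
    by_cases hji : j = i
    · subst hji
      rw [hAdiag X j, hsumB xs hXeq j j, hsum2 xs hXeq j, hXeq j]
      refine proj_unique' (Ω j) (xs j - α j • G j xs) _ _ (hP j _).1 ((hP j _).2)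
        (hmem j) ?_
      intro w hw
      have hVI := min_gradient_nonneg' (fun u => J j (Function.update xs j u)) (G j xs)
        (xs j) w (Ω j) (hΩconv j) (hmem j) hw
        (fun z hz => by simpa using hnash j z hz) (hgrad j xs)
      have he : (xs j - α j • G j xs) - xs j = -(α j • G j xs) := by abel
      rw [he, inner_neg_left, real_inner_smul_left]
      nlinarith [(hα j).1]
    · rw [hAoff X i j hji, hsumB xs hXeq i j, hXeq i]
end
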